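/- For all complex a, b, ξ and ν > 0, the exponential generating function identity holds: e^{ν(aξ + b ξ̄ − ab)} = Σ_{m,n=0}^∞ (a^m b^n)/(m! n!) H^ν_{m,n}(ξ, ξ̄), where the double series converges absolutely. -/

import Mathlib

open Complex

/-- The weighted complex Hermite polynomial `H^ν_{m,n}(ξ, ξ̄)`. -/
noncomputable def hermiteC (ν : ℝ) (m n : ℕ) (ξ : ℂ) : ℂ :=
  (m.factorial : ℂ) * (n.factorial : ℂ) * (ν : ℂ) ^ (m + n) *
    ∑ k ∈ Finset.range (min m n + 1),
      (-1 : ℂ) ^ k * ξ ^ (m - k) * (starRingEnd ℂ ξ) ^ (n - k) /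
        ((ν : ℂ) ^ k * (k.factorial : ℂ) * ((m - k).factorial : ℂ) * ((n - k).factorial : ℂ))

private lemma hermiteC_key (ν : ℝ) (hν : 0 < ν) (a b ξ : ℂ) (k m n : ℕ)
    (hk : k < min m n + 1) :
    (-((ν : ℂ) * a * b)) ^ k / k.factorial *
      (((ν : ℂ) * a * ξ) ^ (m - k) / (m - k).factorial *
        (((ν : ℂ) * b * starRingEnd ℂ ξ) ^ (n - k) / (n - k).factorial)) =
      a ^ m * b ^ n / ((m.factorial : ℂ) * (n.factorial : ℂ)) *
        ((m.factorial : ℂ) * (n.factorial : ℂ) * (ν : ℂ) ^ (m + n) *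
          ((-1 : ℂ) ^ k * ξ ^ (m - k) * (starRingEnd ℂ ξ) ^ (n - k) /
            ((ν : ℂ) ^ k * (k.factorial : ℂ) * ((m - k).factorial : ℂ) *
              ((n - k).factorial : ℂ)))) := by
  have hν0 : (ν : ℂ) ≠ 0 := by exact_mod_cast hν.ne'
  have ha : a ^ m = a ^ k * a ^ (m - k) := by rw [← pow_add]; congr 1; omega
  have hb : b ^ n = b ^ k * b ^ (n - k) := by rw [← pow_add]; congr 1; omega
  have hnu : (ν : ℂ) ^ (m + n) = (ν : ℂ) ^ k * (ν : ℂ) ^ k * (ν : ℂ) ^ (m - k) *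
      (ν : ℂ) ^ (n - k) := by
    rw [← pow_add, ← pow_add, ← pow_add]; congr 1; omega
  have h1 : (k.factorial : ℂ) ≠ 0 := Nat.cast_ne_zero.2 k.factorial_ne_zero
  have h2 : ((m - k).factorial : ℂ) ≠ 0 := Nat.cast_ne_zero.2 (m - k).factorial_ne_zero
  have h3 : ((n - k).factorial : ℂ) ≠ 0 := Nat.cast_ne_zero.2 (n - k).factorial_ne_zero
  have h4 : ((m).factorial : ℂ) ≠ 0 := Nat.cast_ne_zero.2 m.factorial_ne_zero
  have h5 : ((n).factorial : ℂ) ≠ 0 := Nat.cast_ne_zero.2 n.factorial_ne_zero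
  have h6 : ((ν : ℂ)) ^ k ≠ 0 := pow_ne_zero _ hν0
  rw [show (-((ν : ℂ) * a * b)) = (-1) * ((ν : ℂ) * a * b) from by ring]
  have d1 : (k.factorial : ℂ) * (((m - k).factorial : ℂ) * ((n - k).factorial : ℂ)) ≠ 0 :=
    mul_ne_zero h1 (mul_ne_zero h2 h3)
  have d2 : ((m.factorial : ℂ) * (n.factorial : ℂ)) *
      ((ν : ℂ) ^ k * (k.factorial : ℂ) * ((m - k).factorial : ℂ) * ((n - k).factorial : ℂ)) ≠ 0 :=
    mul_ne_zero (mul_ne_zero h4 h5) (mul_ne_zero (mul_ne_zero (mul_ne_zero h6 h1) h2) h3)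
  rw [div_mul_div_comm, div_mul_div_comm, ← mul_div_assoc, div_mul_div_comm,
    div_eq_div_iff d1 d2, ha, hb, hnu]
  simp only [mul_pow]
  ring

/-- The reindexing equivalence `(m,n,k) ↔ (k, m-k, n-k)`. -/
private def hermiteCEquiv : (Σ mn : ℕ × ℕ, Fin (min mn.1 mn.2 + 1)) ≃ ℕ × ℕ × ℕ where
  toFun s := (s.2.1, s.1.1 - s.2.1, s.1.2 - s.2.1)
  invFun t := ⟨(t.1 + t.2.1, t.1 + t.2.2), ⟨t.1, by simp [Nat.lt_succ_iff, le_min_iff]⟩⟩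
  left_inv := by
    rintro ⟨⟨m, n⟩, k, hk⟩
    have hkm : k ≤ m := by omega
    have hkn : k ≤ n := by omega
    refine Sigma.ext ?_ ?_
    · simp only [Prod.mk.injEq]; constructor <;> omega
    · rw [Fin.heq_ext_iff (by simp only; omega)]
  right_inv := by
    rintro ⟨k, p, q⟩
    simp

set_option maxHeartbeats 1000000 in
theorem hermiteC_generating_function (ν : ℝ) (hν : 0 < ν) (a b ξ : ℂ) :
    Summable (fun mn : ℕ × ℕ =>
        a ^ mn.1 * b ^ mn.2 / ((mn.1.factorial : ℂ) * (mn.2.factorial : ℂ)) *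
          hermiteC ν mn.1 mn.2 ξ) ∧
      Complex.exp ((ν : ℂ) * (a * ξ + b * starRingEnd ℂ ξ - a * b)) =
        ∑' mn : ℕ × ℕ,
          a ^ mn.1 * b ^ mn.2 / ((mn.1.factorial : ℂ) * (mn.2.factorial : ℂ)) *
            hermiteC ν mn.1 mn.2 ξ := by
  set x : ℂ := (ν : ℂ) * a * ξ with hxdef
  set y : ℂ := (ν : ℂ) * b * starRingEnd ℂ ξ with hydef
  set z : ℂ := -((ν : ℂ) * a * b) with hzdef
  set g : ℕ × ℕ × ℕ → ℂ := fun t =>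
    z ^ t.1 / t.1.factorial * (x ^ t.2.1 / t.2.1.factorial * (y ^ t.2.2 / t.2.2.factorial))
    with hgdef
  have hns : ∀ w : ℂ, Summable fun n : ℕ => ‖w ^ n / (n.factorial : ℂ)‖ := by
    intro w
    simpa [norm_div, norm_pow] using NormedSpace.expSeries_div_summable ‖w‖
  have hyz : Summable fun p : ℕ × ℕ =>
      ‖x ^ p.1 / (p.1.factorial : ℂ) * (y ^ p.2 / (p.2.factorial : ℂ))‖ :=
    Summable.mul_norm (f := fun n : ℕ => x ^ n / (n.factorial : ℂ))
      (g := fun n : ℕ => y ^ n / (n.factorial : ℂ)) (hns x) (hns y)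
  have hg : Summable g :=
    summable_mul_of_summable_norm (f := fun n : ℕ => z ^ n / (n.factorial : ℂ))
      (g := fun p : ℕ × ℕ =>
        x ^ p.1 / (p.1.factorial : ℂ) * (y ^ p.2 / (p.2.factorial : ℂ))) (hns z) hyz
  have hge : Summable (g ∘ hermiteCEquiv) := (Equiv.summable_iff hermiteCEquiv).2 hg
  have hfib : ∀ mn : ℕ × ℕ, (∑' c : Fin (min mn.1 mn.2 + 1), g (hermiteCEquiv ⟨mn, c⟩)) =
      a ^ mn.1 * b ^ mn.2 / ((mn.1.factorial : ℂ) * (mn.2.factorial : ℂ)) *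
        hermiteC ν mn.1 mn.2 ξ := by
    rintro ⟨m, n⟩
    rw [tsum_fintype]
    rw [hermiteC, Finset.mul_sum, Finset.mul_sum, ← Fin.sum_univ_eq_sum_range]
    refine Finset.sum_congr rfl fun k _ => ?_
    exact hermiteC_key ν hν a b ξ k m n k.2
  constructor
  · have hs := hge.sigma
    simp only [Function.comp] at hs
    exact hs.congr fun mn => hfib mn
  · have hsum : ∀ w : ℂ, Complex.exp w = ∑' n : ℕ, w ^ n / (n.factorial : ℂ) := by
      intro w
      rw [Complex.exp_eq_exp_ℂ, NormedSpace.exp_eq_tsum_div]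
    have harg : (ν : ℂ) * (a * ξ + b * starRingEnd ℂ ξ - a * b) = z + (x + y) := by
      simp only [hxdef, hydef, hzdef]; ring
    rw [harg, Complex.exp_add, Complex.exp_add, hsum, hsum, hsum,
      tsum_mul_tsum_of_summable_norm (f := fun n : ℕ => x ^ n / (n.factorial : ℂ))
        (g := fun n : ℕ => y ^ n / (n.factorial : ℂ)) (hns x) (hns y),
      tsum_mul_tsum_of_summable_norm (f := fun n : ℕ => z ^ n / (n.factorial : ℂ))
        (g := fun p : ℕ × ℕ =>
          x ^ p.1 / (p.1.factorial : ℂ) * (y ^ p.2 / (p.2.factorial : ℂ))) (hns z) hyz]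
    have h1 : ∑' t : ℕ × ℕ × ℕ, g t = ∑' s, g (hermiteCEquiv s) :=
      (Equiv.tsum_eq hermiteCEquiv g).symm
    rw [show (∑' t : ℕ × ℕ × ℕ, z ^ t.1 / (t.1.factorial : ℂ) *
        (x ^ t.2.1 / (t.2.1.factorial : ℂ) * (y ^ t.2.2 / (t.2.2.factorial : ℂ)))) = ∑' t, g t
      from rfl, h1]
    exact (Summable.tsum_sigma hge).trans (tsum_congr fun mn => hfib mn)
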